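/- Let n ≥ 3 be odd and 0 < δ < 1. Then the equation α^(n−1) − α^n = δ·(n−1)^(n−1)/n^n has exactly three real solutions: one in (0, (n−1)/n), one in ((n−1)/n, 1), and one in (−(n−1)/n, 0). -/

import Mathlib

theorem general_tusi_three_roots (n : ℕ) (hn : 3 ≤ n) (hodd : Odd n)
    (δ : ℝ) (h0 : 0 < δ) (h1 : δ < 1) :
    ∃ α₁ α₂ α₃ : ℝ,
      (0 < α₁ ∧ α₁ < ((n : ℝ) - 1) / n) ∧
      (((n : ℝ) - 1) / n < α₂ ∧ α₂ < 1) ∧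
      (-(((n : ℝ) - 1) / n) < α₃ ∧ α₃ < 0) ∧
      α₁ ^ (n - 1) - α₁ ^ n = δ * ((n : ℝ) - 1) ^ (n - 1) / (n : ℝ) ^ n ∧
      α₂ ^ (n - 1) - α₂ ^ n = δ * ((n : ℝ) - 1) ^ (n - 1) / (n : ℝ) ^ n ∧
      α₃ ^ (n - 1) - α₃ ^ n = δ * ((n : ℝ) - 1) ^ (n - 1) / (n : ℝ) ^ n ∧
      ∀ β : ℝ, β ^ (n - 1) - β ^ n = δ * ((n : ℝ) - 1) ^ (n - 1) / (n : ℝ) ^ n →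
        β = α₁ ∨ β = α₂ ∨ β = α₃ := by
  obtain ⟨m, rfl⟩ : ∃ m, n = m + 3 := ⟨n - 3, by omega⟩
  set N : ℝ := ((m : ℝ) + 3) with hN
  have hNcast : ((m + 3 : ℕ) : ℝ) = N := by push_cast [hN]; ring
  have hN0 : (0:ℝ) < N := by positivity
  have hNe : N ≠ 0 := hN0.ne'
  have hm0 : (0:ℝ) ≤ (m:ℝ) := Nat.cast_nonneg m
  have hN1 : (1:ℝ) < N := by rw [hN]; linarith
  set c : ℝ := (N - 1) / N with hc
  have hc0 : 0 < c := by
    apply div_pos (by linarith) hN0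
  have hc1 : c < 1 := by
    rw [hc, div_lt_one hN0]; linarith
  have he1 : m + 3 - 1 = m + 2 := by omega
  have he2 : m + 2 - 1 = m + 1 := by omega
  set F : ℝ → ℝ := fun x => x ^ (m + 2) - x ^ (m + 3) with hF
  have heven : Even (m + 2) := by
    rcases hodd with ⟨k, hk⟩
    exact ⟨k, by omega⟩
  have hodd1 : Odd (m + 1) := by
    rcases hodd with ⟨k, hk⟩
    exact ⟨k - 1, by omega⟩
  set t : ℝ := δ * (N - 1) ^ (m + 2) / N ^ (m + 3) with ht
  have hcont : Continuous F := by fun_prop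
  have hderiv : ∀ x : ℝ, HasDerivAt F (x ^ (m + 1) * (((m:ℝ) + 2) - N * x)) x := by
    intro x
    have h : HasDerivAt F (((m + 2 : ℕ) : ℝ) * x ^ (m + 2 - 1) - ((m + 3 : ℕ) : ℝ) * x ^ (m + 3 - 1)) x :=
      (hasDerivAt_pow (m + 2) x).sub (hasDerivAt_pow (m + 3) x)
    convert h using 1
    simp only [he1, he2] at *
    push_cast
    rw [hN]
    ring
  have hderiv' : ∀ x : ℝ, deriv F x = x ^ (m + 1) * (((m:ℝ) + 2) - N * x) :=
    fun x => (hderiv x).deriv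
  have hF0 : F 0 = 0 := by simp [hF]
  have hF1 : F 1 = 0 := by simp [hF]
  have hFc : F c = (N - 1) ^ (m + 2) / N ^ (m + 3) := by
    rw [hF]
    simp only [hc]
    rw [div_pow, div_pow]
    rw [div_sub_div _ _ (pow_ne_zero _ hNe) (pow_ne_zero _ hNe)]
    rw [div_eq_div_iff (by positivity) (by positivity)]
    ring
  have hNs : (0:ℝ) < N - 1 := by linarith
  have hFcpos : 0 < F c := by
    rw [hFc]; exact div_pos (pow_pos hNs _) (pow_pos hN0 _)
  have htpos : 0 < t := by
    rw [ht]; exact div_pos (mul_pos h0 (pow_pos hNs _)) (pow_pos hN0 _)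
  have htc : t < F c := by
    rw [ht, hFc, div_lt_div_iff₀ (pow_pos hN0 _) (pow_pos hN0 _)]
    have hp : 0 < (N - 1) ^ (m + 2) * N ^ (m + 3) := mul_pos (pow_pos hNs _) (pow_pos hN0 _)
    nlinarith
  have hFnegc : F (-c) = c ^ (m + 2) * (1 + c) := by
    rw [hF]
    simp only
    rw [heven.neg_pow]
    have : (-c) ^ (m + 3) = -c ^ (m + 3) := by
      have : Odd (m + 3) := by rcases hodd with ⟨k, hk⟩; exact ⟨k, by omega⟩
      exact this.neg_pow c
    rw [this]
    ring
  have hFcc : F c = c ^ (m + 2) * (1 - c) := by rw [hF]; ring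
  have htnegc : t < F (-c) := by
    have h2 : F c < F (-c) := by
      rw [hFcc, hFnegc]
      have : 0 < c ^ (m + 2) := by positivity
      nlinarith
    linarith
  -- monotonicity
  have mono1 : StrictMonoOn F (Set.Icc 0 c) := by
    apply strictMonoOn_of_deriv_pos (convex_Icc 0 c) hcont.continuousOn
    intro x hx
    rw [interior_Icc] at hx
    rw [hderiv']
    have hx0 : 0 < x := hx.1
    have hxc : x < c := hx.2
    have : N * x < N - 1 := by
      rw [hc, lt_div_iff₀ hN0] at hxc; linarith
    have : ((m:ℝ) + 2) - N * x > 0 := by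
      have : N - 1 = (m:ℝ) + 2 := by rw [hN]; ring
      linarith
    positivity
  have anti1 : StrictAntiOn F (Set.Icc c 1) := by
    apply strictAntiOn_of_deriv_neg (convex_Icc c 1) hcont.continuousOn
    intro x hx
    rw [interior_Icc] at hx
    rw [hderiv']
    have hx0 : 0 < x := lt_trans hc0 hx.1
    have hxc : c < x := hx.1
    have h2 : N - 1 < N * x := by
      rw [hc, div_lt_iff₀ hN0] at hxc; linarith
    have h3 : ((m:ℝ) + 2) - N * x < 0 := by
      have : N - 1 = (m:ℝ) + 2 := by rw [hN]; ring
      linarith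
    exact mul_neg_of_pos_of_neg (by positivity) h3
  have anti2 : StrictAntiOn F (Set.Iic 0) := by
    apply strictAntiOn_of_deriv_neg (convex_Iic 0) hcont.continuousOn
    intro x hx
    rw [interior_Iic] at hx
    rw [hderiv']
    have hx0 : x < 0 := hx
    have h1' : x ^ (m + 1) < 0 := hodd1.pow_neg hx0
    have h2 : 0 < ((m:ℝ) + 2) - N * x := by nlinarith
    exact mul_neg_of_neg_of_pos h1' h2
  -- existence
  obtain ⟨α₁, hmem₁, heq₁⟩ : t ∈ F '' Set.Ioo 0 c := by
    apply intermediate_value_Ioo hc0.le hcont.continuousOn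
    rw [hF0]; exact ⟨htpos, htc⟩
  obtain ⟨α₂, hmem₂, heq₂⟩ : t ∈ F '' Set.Ioo c 1 := by
    apply intermediate_value_Ioo' hc1.le hcont.continuousOn
    rw [hF1]; exact ⟨htpos, htc⟩
  obtain ⟨α₃, hmem₃, heq₃⟩ : t ∈ F '' Set.Ioo (-c) 0 := by
    apply intermediate_value_Ioo' (by linarith) hcont.continuousOn
    rw [hF0]; exact ⟨htpos, htnegc⟩
  have hNsub : ((m : ℝ) + 3) - 1 = N - 1 := by rw [hN]
  have hgoalEq : ∀ x : ℝ, (x ^ (m + 3 - 1) - x ^ (m + 3) =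
      δ * (((m+3 : ℕ) : ℝ) - 1) ^ (m + 3 - 1) / ((m+3 : ℕ) : ℝ) ^ (m + 3)) ↔ F x = t := by
    intro x
    rw [he1, hNcast, ht, hF]
  refine ⟨α₁, α₂, α₃, ?_, ?_, ?_, ?_, ?_, ?_, ?_⟩
  · rw [hNcast]; exact ⟨hmem₁.1, hmem₁.2⟩
  · rw [hNcast]; exact ⟨hmem₂.1, hmem₂.2⟩
  · rw [hNcast]; exact ⟨hmem₃.1, hmem₃.2⟩
  · rw [hgoalEq]; exact heq₁
  · rw [hgoalEq]; exact heq₂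
  · rw [hgoalEq]; exact heq₃
  · intro β hβ
    rw [hgoalEq] at hβ
    rcases lt_trichotomy β 0 with hβ0 | hβ0 | hβ0
    · -- β < 0 : β = α₃
      right; right
      have hβc : -c < β := by
        by_contra h
        push_neg at h
        rcases eq_or_lt_of_le h with h' | h'
        · rw [← h'] at htnegc; linarith [hβ]
        · have := anti2 (Set.mem_Iic.2 (by linarith : β ≤ (0:ℝ)))
            (Set.mem_Iic.2 (by linarith : -c ≤ (0:ℝ))) h'
          linarith [hβ]
      exact anti2.injOn (Set.mem_Iic.2 hβ0.le) (Set.mem_Iic.2 hmem₃.2.le)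
        (by rw [hβ, heq₃])
    · exfalso; rw [hβ0, hF0] at hβ; linarith
    · -- β > 0
      rcases lt_trichotomy β c with hβc | hβc | hβc
      · left
        exact mono1.injOn (Set.mem_Icc.2 ⟨hβ0.le, hβc.le⟩)
          (Set.mem_Icc.2 ⟨hmem₁.1.le, hmem₁.2.le⟩) (by rw [hβ, heq₁])
      · exfalso; rw [hβc] at hβ; linarith
      · rcases lt_trichotomy β 1 with hβ1 | hβ1 | hβ1
        · right; left
          exact anti1.injOn (Set.mem_Icc.2 ⟨hβc.le, hβ1.le⟩)
            (Set.mem_Icc.2 ⟨hmem₂.1.le, hmem₂.2.le⟩) (by rw [hβ, heq₂])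
        · exfalso; rw [hβ1, hF1] at hβ; linarith
        · exfalso
          have h1' : F β = β ^ (m + 2) * (1 - β) := by rw [hF]; ring
          have h2 : (0:ℝ) < β ^ (m + 2) := by positivity
          have h3 : F β < 0 := by
            rw [h1']; exact mul_neg_of_pos_of_neg h2 (by linarith)
          linarith [hβ]
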